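/- arXiv:1806.06127 — 2 statements merged into one kernel-verified Lean document; each statement's English description precedes it below -/
import Mathlib

section
/- The minimal average acceleration cost for a C^2 curve ξ:[0,h]→ℝ^d with (ξ,ξ')(0)=(x,v) and (ξ,ξ')(h)=(x',v') satisfies: the infimum of ∫₀ʰ |ξ''(t)|² dt over all such curves equals C_h(x,v;x',v')/h where C_h(x,v;x',v') := |v'-v|² + 12|((x'-x)/h) - (v'+v)/2|², and is attained by a cubic polynomial. -/
noncomputable section

open RealInnerProductSpace

abbrev E (d : ℕ) := EuclideanSpace ℝ (Fin d)

/-- The minimal acceleration cost function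
`C_h(x,v;x',v') = |v'-v|² + 12|((x'-x)/h) - (v'+v)/2|²`. -/
noncomputable def Ch (d : ℕ) (h : ℝ) (x v x' v' : E d) : ℝ :=
  ‖v' - v‖ ^ 2 + 12 * ‖h⁻¹ • (x' - x) - (1 / 2 : ℝ) • (v' + v)‖ ^ 2

/-- The admissible curves: `ξ ∈ C²([0,h],ℝ^d)` with `(ξ,ξ')(0) = (x,v)` and
`(ξ,ξ')(h) = (x',v')`. -/
def Admissible (d : ℕ) (h : ℝ) (x v x' v' : E d) (ξ : ℝ → E d) : Prop :=
  ContDiff ℝ 2 ξ ∧ ξ 0 = x ∧ deriv ξ 0 = v ∧ ξ h = x' ∧ deriv ξ h = v'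

namespace MinAccel


variable {d : ℕ}

lemma cubic_hasDerivAt (a b c₂ c₃ : E d) (t : ℝ) :
    HasDerivAt (fun s : ℝ => a + s • b + s ^ 2 • c₂ + s ^ 3 • c₃)
      (b + (2 * t) • c₂ + (3 * t ^ 2) • c₃) t := by
  have h1 : HasDerivAt (fun s : ℝ => s • b) ((1 : ℝ) • b) t := (hasDerivAt_id t).smul_const b
  have h2 : HasDerivAt (fun s : ℝ => s ^ 2 • c₂) (((2 : ℕ) * t ^ 1 : ℝ) • c₂) t :=
    (hasDerivAt_pow 2 t).smul_const c₂
  have h3 : HasDerivAt (fun s : ℝ => s ^ 3 • c₃) (((3 : ℕ) * t ^ 2 : ℝ) • c₃) t :=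
    (hasDerivAt_pow 3 t).smul_const c₃
  have H := (((hasDerivAt_const t a).add h1).add h2).add h3
  refine H.congr_deriv ?_
  push_cast
  simp

lemma cubic_deriv (a b c₂ c₃ : E d) :
    deriv (fun s : ℝ => a + s • b + s ^ 2 • c₂ + s ^ 3 • c₃)
      = fun t : ℝ => b + (2 * t) • c₂ + (3 * t ^ 2) • c₃ :=
  funext fun t => (cubic_hasDerivAt a b c₂ c₃ t).deriv

lemma cubic_deriv2_hasDerivAt (b c₂ c₃ : E d) (t : ℝ) :
    HasDerivAt (fun s : ℝ => b + (2 * s) • c₂ + (3 * s ^ 2) • c₃)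
      ((2 : ℝ) • c₂ + (6 * t) • c₃) t := by
  have h1 : HasDerivAt (fun s : ℝ => (2 * s) • c₂) ((2 : ℝ) • c₂) t := by
    simpa using ((hasDerivAt_id t).const_mul 2).smul_const c₂
  have h2 : HasDerivAt (fun s : ℝ => (3 * s ^ 2) • c₃) ((6 * t : ℝ) • c₃) t := by
    have := ((hasDerivAt_pow 2 t).const_mul 3).smul_const c₃
    refine this.congr_deriv ?_
    push_cast
    congr 1
    norm_num <;> ring
  have H := ((hasDerivAt_const t b).add h1).add h2
  refine H.congr_deriv ?_
  simp

lemma cubic_iteratedDeriv2 (a b c₂ c₃ : E d) (t : ℝ) :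
    iteratedDeriv 2 (fun s : ℝ => a + s • b + s ^ 2 • c₂ + s ^ 3 • c₃) t
      = (2 : ℝ) • c₂ + (6 * t) • c₃ := by
  have : iteratedDeriv 2 (fun s : ℝ => a + s • b + s ^ 2 • c₂ + s ^ 3 • c₃)
      = deriv (deriv (fun s : ℝ => a + s • b + s ^ 2 • c₂ + s ^ 3 • c₃)) := by
    rw [iteratedDeriv_succ, iteratedDeriv_one]
  rw [this, cubic_deriv]
  exact (cubic_deriv2_hasDerivAt b c₂ c₃ t).deriv

lemma cubic_contDiff (a b c₂ c₃ : E d) :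
    ContDiff ℝ 2 (fun s : ℝ => a + s • b + s ^ 2 • c₂ + s ^ 3 • c₃) := by
  refine ((contDiff_const.add (contDiff_id.smul contDiff_const)).add
    ((contDiff_id.pow 2).smul contDiff_const)).add ((contDiff_id.pow 3).smul contDiff_const)



variable {d : ℕ}

lemma deriv_deriv_eq (ξ : ℝ → E d) : deriv (deriv ξ) = iteratedDeriv 2 ξ := by
  rw [iteratedDeriv_succ, iteratedDeriv_one]

lemma acc_cont {ξ : ℝ → E d} (hξ : ContDiff ℝ 2 ξ) : Continuous (iteratedDeriv 2 ξ) :=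
  hξ.continuous_iteratedDeriv 2 le_rfl

lemma deriv_hasDerivAt {ξ : ℝ → E d} (hξ : ContDiff ℝ 2 ξ) (t : ℝ) :
    HasDerivAt (deriv ξ) (iteratedDeriv 2 ξ t) t := by
  have hd : DifferentiableAt ℝ (deriv ξ) t := by
    have := hξ.differentiable_iteratedDeriv 1 (by norm_num)
    simpa [iteratedDeriv_one] using this t
  simpa [deriv_deriv_eq ξ] using hd.hasDerivAt

lemma moment0 {ξ : ℝ → E d} (h : ℝ) (hξ : ContDiff ℝ 2 ξ) :
    ∫ t in (0:ℝ)..h, iteratedDeriv 2 ξ t = deriv ξ h - deriv ξ 0 := by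
  refine intervalIntegral.integral_eq_sub_of_hasDerivAt (fun t _ => deriv_hasDerivAt hξ t) ?_
  exact (acc_cont hξ).intervalIntegrable _ _

lemma moment1 {ξ : ℝ → E d} (h : ℝ) (hξ : ContDiff ℝ 2 ξ) :
    ∫ t in (0:ℝ)..h, t • iteratedDeriv 2 ξ t
      = (h • deriv ξ h - ξ h) - ((0:ℝ) • deriv ξ 0 - ξ 0) := by
  have key : ∀ t : ℝ, HasDerivAt (fun s : ℝ => s • deriv ξ s - ξ s)
      (t • iteratedDeriv 2 ξ t) t := by
    intro t
    have h1 := (hasDerivAt_id t).smul (deriv_hasDerivAt hξ t)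
    have h2 : HasDerivAt ξ (deriv ξ t) t :=
      ((hξ.differentiable (by norm_num)) t).hasDerivAt
    refine (h1.sub h2).congr_deriv ?_
    simp
  refine intervalIntegral.integral_eq_sub_of_hasDerivAt (fun t _ => key t) ?_
  exact (continuous_id.smul (acc_cont hξ)).intervalIntegrable _ _

lemma integral_inner_const (h : ℝ) (c : E d) {f : ℝ → E d}
    (hf : IntervalIntegrable f MeasureTheory.volume 0 h) :
    ∫ t in (0:ℝ)..h, ⟪c, f t⟫ = ⟪c, ∫ t in (0:ℝ)..h, f t⟫ := by
  exact (innerSL ℝ c).intervalIntegral_comp_comm hf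

/-- Key inequality: the affine acceleration minimizes among accelerations with the
same first two moments. -/
lemma key_ineq (h : ℝ) (p q : E d) (a : ℝ → E d) (ha : Continuous a)
    (h0 : ∫ t in (0:ℝ)..h, (a t - (p + t • q)) = 0)
    (h1 : ∫ t in (0:ℝ)..h, t • (a t - (p + t • q)) = 0)
    (hh : 0 ≤ h) :
    ∫ t in (0:ℝ)..h, ‖p + t • q‖ ^ 2 ≤ ∫ t in (0:ℝ)..h, ‖a t‖ ^ 2 := by
  set b : ℝ → E d := fun t => a t - (p + t • q) with hb
  have hbc : Continuous b := ha.sub (continuous_const.add (continuous_id.smul continuous_const))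
  have hafc : Continuous fun t : ℝ => p + t • q :=
    continuous_const.add (continuous_id.smul continuous_const)
  have hb1 : Continuous fun t : ℝ => t • b t := by fun_prop
  have hsplit : ∀ t : ℝ, ‖a t‖ ^ 2
      = ‖p + t • q‖ ^ 2 + (2 * ⟪p + t • q, b t⟫ + ‖b t‖ ^ 2) := by
    intro t
    have : a t = (p + t • q) + b t := by simp [hb]
    rw [this, norm_add_sq_real]
    ring
  have hcross : ∫ t in (0:ℝ)..h, ⟪p + t • q, b t⟫ = 0 := by
    have e : ∀ t : ℝ, ⟪p + t • q, b t⟫ = ⟪p, b t⟫ + ⟪q, t • b t⟫ := by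
      intro t
      rw [inner_add_left, real_inner_smul_left, real_inner_smul_right]
    rw [intervalIntegral.integral_congr (g := fun t => ⟪p, b t⟫ + ⟪q, t • b t⟫)
      (fun t _ => e t)]
    rw [intervalIntegral.integral_add
      ((continuous_const.inner hbc).intervalIntegrable _ _)
      ((continuous_const.inner (hb1)).intervalIntegrable _ _)]
    rw [integral_inner_const h p (hbc.intervalIntegrable _ _),
      integral_inner_const h q ((hb1).intervalIntegrable _ _)]
    rw [h0, h1]
    simp
  calc ∫ t in (0:ℝ)..h, ‖p + t • q‖ ^ 2
      ≤ (∫ t in (0:ℝ)..h, ‖p + t • q‖ ^ 2)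
        + ((2 * ∫ t in (0:ℝ)..h, ⟪p + t • q, b t⟫) + ∫ t in (0:ℝ)..h, ‖b t‖ ^ 2) := by
        rw [hcross]
        have : (0:ℝ) ≤ ∫ t in (0:ℝ)..h, ‖b t‖ ^ 2 :=
          intervalIntegral.integral_nonneg hh (fun t _ => by positivity)
        linarith
    _ = ∫ t in (0:ℝ)..h, ‖a t‖ ^ 2 := by
        rw [← intervalIntegral.integral_const_mul, ← intervalIntegral.integral_add
          (show IntervalIntegrable (fun t => 2 * ⟪p + t • q, b t⟫) MeasureTheory.volume 0 h from
            (continuous_const.mul ((hafc.inner hbc))).intervalIntegrable _ _)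
          (show IntervalIntegrable (fun t => ‖b t‖ ^ 2) MeasureTheory.volume 0 h from
            (hbc.norm.pow 2).intervalIntegrable _ _),
          ← intervalIntegral.integral_add
          (show IntervalIntegrable (fun t => ‖p + t • q‖ ^ 2) MeasureTheory.volume 0 h from
            ((hafc.norm).pow 2).intervalIntegrable _ _)
          (show IntervalIntegrable (fun t => 2 * ⟪p + t • q, b t⟫ + ‖b t‖ ^ 2)
            MeasureTheory.volume 0 h from
          (((continuous_const.mul ((hafc.inner hbc))).add
            ((hbc.norm.pow 2))).intervalIntegrable _ _))]
        exact intervalIntegral.integral_congr fun t _ => (hsplit t).symm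

lemma integral_norm_affine (h : ℝ) (p q : E d) :
    ∫ t in (0:ℝ)..h, ‖p + t • q‖ ^ 2
      = h * ‖p‖ ^ 2 + h ^ 2 * ⟪p, q⟫ + h ^ 3 / 3 * ‖q‖ ^ 2 := by
  have e : ∀ t : ℝ, ‖p + t • q‖ ^ 2
      = ‖p‖ ^ 2 + (2 * ⟪p, q⟫) * t + ‖q‖ ^ 2 * t ^ 2 := by
    intro t
    rw [norm_add_sq_real, real_inner_smul_right, norm_smul]
    simp [mul_pow]
    ring
  rw [intervalIntegral.integral_congr (g := fun t : ℝ =>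
    ‖p‖ ^ 2 + (2 * ⟪p, q⟫) * t + ‖q‖ ^ 2 * t ^ 2) (fun t _ => e t)]
  rw [intervalIntegral.integral_add ((by continuity : Continuous fun t : ℝ => ‖p‖^2 + (2*⟪p,q⟫)*t).intervalIntegrable _ _) ((by continuity : Continuous fun t : ℝ => ‖q‖^2 * t^2).intervalIntegrable _ _),
    intervalIntegral.integral_add ((continuous_const : Continuous fun _ : ℝ => ‖p‖^2).intervalIntegrable _ _) ((by continuity : Continuous fun t : ℝ => (2*⟪p,q⟫)*t).intervalIntegrable _ _)]
  rw [intervalIntegral.integral_const, intervalIntegral.integral_const_mul,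
    intervalIntegral.integral_const_mul]
  simp [integral_id, integral_pow]
  ring


end MinAccel

/-- The infimum of `∫₀ʰ |ξ''(t)|² dt` over admissible `C²` curves equals
`C_h(x,v;x',v')/h` and is attained by a cubic polynomial. -/
theorem min_acceleration_cost {d : ℕ} (h : ℝ) (hh : 0 < h) (x v x' v' : E d) :
    sInf {c : ℝ | ∃ ξ : ℝ → E d, Admissible d h x v x' v' ξ ∧
        c = ∫ t in (0:ℝ)..h, ‖iteratedDeriv 2 ξ t‖ ^ 2} = Ch d h x v x' v' / h ∧
    ∃ ξ : ℝ → E d, (∃ a b c₂ c₃ : E d, ∀ t : ℝ,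
        ξ t = a + t • b + t ^ 2 • c₂ + t ^ 3 • c₃) ∧
      Admissible d h x v x' v' ξ ∧
      (∫ t in (0:ℝ)..h, ‖iteratedDeriv 2 ξ t‖ ^ 2) = Ch d h x v x' v' / h := by
  have hne : h ≠ 0 := ne_of_gt hh
  set δ : E d := v' - v with hδ
  set w : E d := h⁻¹ • (x' - x) - (1 / 2 : ℝ) • (v' + v) with hw
  set c₂ : E d := h⁻¹ • ((3 : ℝ) • w + (1 / 2 : ℝ) • δ) with hc₂
  set c₃ : E d := -((2 / h ^ 2 : ℝ) • w) with hc₃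
  set ξ₀ : ℝ → E d := fun s => x + s • v + s ^ 2 • c₂ + s ^ 3 • c₃ with hξ₀
  -- the acceleration of the cubic
  set p : E d := (2 : ℝ) • c₂ with hp
  set q : E d := (6 : ℝ) • c₃ with hq
  have hacc : ∀ t : ℝ, iteratedDeriv 2 ξ₀ t = p + t • q := by
    intro t
    rw [hξ₀, MinAccel.cubic_iteratedDeriv2, hp, hq]
    module
  -- admissibility of the cubic
  have hadm : Admissible d h x v x' v' ξ₀ := by
    refine ⟨MinAccel.cubic_contDiff x v c₂ c₃, by simp [hξ₀], ?_, ?_, ?_⟩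
    · rw [hξ₀, MinAccel.cubic_deriv]
      simp
    · show x + h • v + h ^ 2 • c₂ + h ^ 3 • c₃ = x'
      rw [hc₂, hc₃, hw, hδ]
      match_scalars <;> field_simp <;> ring
    · rw [hξ₀, MinAccel.cubic_deriv]
      show v + (2 * h) • c₂ + (3 * h ^ 2) • c₃ = v'
      rw [hc₂, hc₃, hw, hδ]
      match_scalars <;> field_simp <;> ring
  -- the cost of the cubic
  have hCh : Ch d h x v x' v' = ‖δ‖ ^ 2 + 12 * ‖w‖ ^ 2 := by rw [Ch, hδ, hw]
  have hcost : (∫ t in (0:ℝ)..h, ‖iteratedDeriv 2 ξ₀ t‖ ^ 2) = Ch d h x v x' v' / h := by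
    rw [intervalIntegral.integral_congr (g := fun t : ℝ => ‖p + t • q‖ ^ 2)
        (fun t _ => by rw [hacc t]),
      MinAccel.integral_norm_affine, hCh, hp, hq, hc₂, hc₃]
    simp only [← real_inner_self_eq_norm_sq, inner_add_left, inner_add_right,
      real_inner_smul_left, real_inner_smul_right, inner_neg_left, inner_neg_right,
      real_inner_comm δ w]
    field_simp
    ring
  -- moments of any admissible curve
  have moments : ∀ ξ : ℝ → E d, Admissible d h x v x' v' ξ →
      (∫ t in (0:ℝ)..h, iteratedDeriv 2 ξ t) = v' - v ∧
      (∫ t in (0:ℝ)..h, t • iteratedDeriv 2 ξ t) = h • v' - x' + x := by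
    rintro ξ ⟨hc, h0x, h0v, hhx, hhv⟩
    constructor
    · rw [MinAccel.moment0 h hc, hhv, h0v]
    · rw [MinAccel.moment1 h hc, hhv, hhx, h0x, h0v]
      module
  -- lower bound for any admissible curve
  have hlow : ∀ ξ : ℝ → E d, Admissible d h x v x' v' ξ →
      Ch d h x v x' v' / h ≤ ∫ t in (0:ℝ)..h, ‖iteratedDeriv 2 ξ t‖ ^ 2 := by
    intro ξ hξ
    have hac : Continuous (iteratedDeriv 2 ξ) := MinAccel.acc_cont hξ.1
    have hafc : Continuous fun t : ℝ => p + t • q :=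
      continuous_const.add (continuous_id.smul continuous_const)
    have m := moments ξ hξ
    have m₀ := moments ξ₀ hadm
    have haffint : (∫ t in (0:ℝ)..h, (p + t • q)) = v' - v := by
      rw [intervalIntegral.integral_congr (g := fun t : ℝ => iteratedDeriv 2 ξ₀ t)
        (fun t _ => (hacc t).symm)]
      exact m₀.1
    have haffint1 : (∫ t in (0:ℝ)..h, t • (p + t • q)) = h • v' - x' + x := by
      rw [intervalIntegral.integral_congr (g := fun t : ℝ => t • iteratedDeriv 2 ξ₀ t)
        (fun t _ => by simp only [hacc t])]
      exact m₀.2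
    have h0 : (∫ t in (0:ℝ)..h, (iteratedDeriv 2 ξ t - (p + t • q))) = 0 := by
      rw [intervalIntegral.integral_sub (hac.intervalIntegrable _ _)
        (hafc.intervalIntegrable _ _), m.1, haffint]
      simp
    have h1 : (∫ t in (0:ℝ)..h, t • (iteratedDeriv 2 ξ t - (p + t • q))) = 0 := by
      have e : ∀ t : ℝ, t • (iteratedDeriv 2 ξ t - (p + t • q))
          = t • iteratedDeriv 2 ξ t - t • (p + t • q) := fun t => smul_sub _ _ _
      rw [intervalIntegral.integral_congr
        (g := fun t : ℝ => t • iteratedDeriv 2 ξ t - t • (p + t • q)) (fun t _ => e t)]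
      have c1 : Continuous fun t : ℝ => t • iteratedDeriv 2 ξ t := by fun_prop
      have c2 : Continuous fun t : ℝ => t • (p + t • q) := by fun_prop
      rw [intervalIntegral.integral_sub (c1.intervalIntegrable _ _)
        (c2.intervalIntegrable _ _), m.2, haffint1]
      simp
    have key := MinAccel.key_ineq h p q (iteratedDeriv 2 ξ) hac h0 h1 hh.le
    calc Ch d h x v x' v' / h = ∫ t in (0:ℝ)..h, ‖iteratedDeriv 2 ξ₀ t‖ ^ 2 := hcost.symm
      _ = ∫ t in (0:ℝ)..h, ‖p + t • q‖ ^ 2 :=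
          intervalIntegral.integral_congr (fun t _ => by rw [hacc t])
      _ ≤ _ := key
  -- assemble
  have hmem : Ch d h x v x' v' / h ∈ {c : ℝ | ∃ ξ : ℝ → E d, Admissible d h x v x' v' ξ ∧
      c = ∫ t in (0:ℝ)..h, ‖iteratedDeriv 2 ξ t‖ ^ 2} := ⟨ξ₀, hadm, hcost.symm⟩
  have hlb : ∀ c ∈ {c : ℝ | ∃ ξ : ℝ → E d, Admissible d h x v x' v' ξ ∧
      c = ∫ t in (0:ℝ)..h, ‖iteratedDeriv 2 ξ t‖ ^ 2}, Ch d h x v x' v' / h ≤ c := by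
    rintro c ⟨ξ, hξ, rfl⟩
    exact hlow ξ hξ
  refine ⟨le_antisymm (csInf_le ⟨_, hlb⟩ hmem) (le_csInf ⟨_, hmem⟩ hlb), ξ₀,
    ⟨x, v, c₂, c₃, fun t => rfl⟩, hadm, hcost⟩
end
end

section
/- The Kantorovich functional W_h associated with the cost C_h satisfies W_h(μ,ν) = W₂((G_h ∘ F_h)_# μ, (G_h)_# ν) for all μ, ν ∈ P₂(ℝ^{2d}), where W₂ denotes the 2-Wasserstein distance. Consequently, the infimum defining W_h(μ,ν) is attained. -/
open MeasureTheory

noncomputable section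

/-- `p` is a coupling of `μ` and `ν`. -/
def IsCoupling {X : Type*} [MeasurableSpace X] (μ ν : Measure X)
    (p : Measure (X × X)) : Prop :=
  p.map Prod.fst = μ ∧ p.map Prod.snd = ν

/-- The squared Kantorovich functional `W_h(μ,ν)²` associated with the cost `C_h`. -/
noncomputable def Whsq (d : ℕ) (h : ℝ) (μ ν : Measure (E d × E d)) : ℝ :=
  sInf {c : ℝ | ∃ p : Measure ((E d × E d) × (E d × E d)), IsCoupling μ ν p ∧
    c = ∫ z, Ch d h z.1.1 z.1.2 z.2.1 z.2.2 ∂p}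

/-- The squared 2-Wasserstein distance on `P₂(ℝ^{2d})`. -/
noncomputable def W2sq (d : ℕ) (μ ν : Measure (E d × E d)) : ℝ :=
  sInf {c : ℝ | ∃ p : Measure ((E d × E d) × (E d × E d)), IsCoupling μ ν p ∧
    c = ∫ z, (‖z.1.1 - z.2.1‖ ^ 2 + ‖z.1.2 - z.2.2‖ ^ 2) ∂p}

/-- The free transport map `F_h(x,v) = (x+hv, v)`. -/
def Fmap (d : ℕ) (h : ℝ) : E d × E d → E d × E d := fun z => (z.1 + h • z.2, z.2)

/-- The map `G_h(x,v) = (√3(2x/h - v), v)`. -/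
noncomputable def Gmap (d : ℕ) (h : ℝ) : E d × E d → E d × E d :=
  fun z => (Real.sqrt 3 • ((2 / h) • z.1 - z.2), z.2)

namespace WhAux

variable {d : ℕ}

instance : BorelSpace ((E d × E d) × (E d × E d)) := Prod.borelSpace

/-- inverse of Gmap -/
noncomputable def Ginv (d : ℕ) (h : ℝ) : E d × E d → E d × E d :=
  fun w => ((h / 2) • ((Real.sqrt 3)⁻¹ • w.1 + w.2), w.2)

/-- inverse of Fmap -/
def Finv (d : ℕ) (h : ℝ) : E d × E d → E d × E d := fun z => (z.1 - h • z.2, z.2)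

lemma sqrt3_ne : (Real.sqrt 3) ≠ 0 := by
  positivity

lemma Ginv_Gmap (h : ℝ) (hh : 0 < h) (z : E d × E d) : Ginv d h (Gmap d h z) = z := by
  obtain ⟨x, v⟩ := z
  simp only [Gmap, Ginv, Prod.mk.injEq]
  refine ⟨?_, trivial⟩
  rw [inv_smul_smul₀ sqrt3_ne, sub_add_cancel, smul_smul]
  rw [show h / 2 * (2 / h) = 1 by field_simp, one_smul]

lemma Gmap_Ginv (h : ℝ) (hh : 0 < h) (z : E d × E d) : Gmap d h (Ginv d h z) = z := by
  obtain ⟨x, v⟩ := z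
  simp only [Gmap, Ginv, Prod.mk.injEq]
  refine ⟨?_, trivial⟩
  rw [smul_smul, show 2 / h * (h / 2) = 1 by field_simp, one_smul, add_sub_cancel_right,
    smul_inv_smul₀ sqrt3_ne]

lemma Finv_Fmap (h : ℝ) (z : E d × E d) : Finv d h (Fmap d h z) = z := by
  obtain ⟨x, v⟩ := z
  simp [Finv, Fmap]

lemma Fmap_Finv (h : ℝ) (z : E d × E d) : Fmap d h (Finv d h z) = z := by
  obtain ⟨x, v⟩ := z
  simp [Finv, Fmap]

lemma continuous_Fmap (h : ℝ) : Continuous (Fmap d h) := by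
  unfold Fmap; fun_prop

lemma continuous_Gmap (h : ℝ) : Continuous (Gmap d h) := by
  unfold Gmap; fun_prop

lemma continuous_Finv (h : ℝ) : Continuous (Finv d h) := by
  unfold Finv; fun_prop

lemma continuous_Ginv (h : ℝ) : Continuous (Ginv d h) := by
  unfold Ginv; fun_prop

/-- the key algebraic identity -/
lemma cost_identity (h : ℝ) (hh : 0 < h) (z w : E d × E d) :
    ‖((Gmap d h ∘ Fmap d h) z).1 - (Gmap d h w).1‖ ^ 2
      + ‖((Gmap d h ∘ Fmap d h) z).2 - (Gmap d h w).2‖ ^ 2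
    = Ch d h z.1 z.2 w.1 w.2 := by
  obtain ⟨x, v⟩ := z
  obtain ⟨x', v'⟩ := w
  have hne : h ≠ 0 := ne_of_gt hh
  set u : E d := (2 / h) • (x - x') + v + v' with hu
  have h1 : ((Gmap d h ∘ Fmap d h) (x, v)).1 - (Gmap d h (x', v')).1 = Real.sqrt 3 • u := by
    simp only [Function.comp_apply, Gmap, Fmap, hu]
    match_scalars <;> (field_simp; try ring)
  have h2 : h⁻¹ • (x' - x) - (1 / 2 : ℝ) • (v' + v) = (-(1 / 2) : ℝ) • u := by
    rw [hu]
    match_scalars <;> (field_simp; try ring)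
  have h3 : ((Gmap d h ∘ Fmap d h) (x, v)).2 - (Gmap d h (x', v')).2 = v - v' := rfl
  rw [h1, h3, Ch, h2]
  rw [norm_smul, norm_smul, norm_sub_rev]
  rw [Real.norm_eq_abs, Real.norm_eq_abs, abs_of_nonneg (Real.sqrt_nonneg 3)]
  rw [mul_pow, mul_pow, Real.sq_sqrt (by norm_num : (3:ℝ) ≥ 0)]
  rw [show |(-(1/2) : ℝ)| = 1/2 from by norm_num]
  ring

end WhAux

section
open WhAux
variable {d : ℕ}

lemma continuous_c2 : Continuous (fun z : (E d × E d) × (E d × E d) =>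
    (‖z.1.1 - z.2.1‖ ^ 2 + ‖z.1.2 - z.2.2‖ ^ 2)) := by fun_prop

lemma continuous_c1 (h : ℝ) : Continuous (fun z : (E d × E d) × (E d × E d) =>
    Ch d h z.1.1 z.1.2 z.2.1 z.2.2) := by
  unfold Ch; fun_prop

lemma T1_T1inv (h : ℝ) (hh : 0 < h) (z : E d × E d) :
    (Gmap d h ∘ Fmap d h) ((Finv d h ∘ Ginv d h) z) = z := by
  simp only [Function.comp_apply, Fmap_Finv, Gmap_Ginv h hh]

lemma T1inv_T1 (h : ℝ) (hh : 0 < h) (z : E d × E d) :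
    (Finv d h ∘ Ginv d h) ((Gmap d h ∘ Fmap d h) z) = z := by
  simp only [Function.comp_apply, Ginv_Gmap h hh, Finv_Fmap]

lemma couplings_sets_eq (h : ℝ) (hh : 0 < h) (μ ν : Measure (E d × E d)) :
    {c : ℝ | ∃ p : Measure ((E d × E d) × (E d × E d)), IsCoupling μ ν p ∧
      c = ∫ z, Ch d h z.1.1 z.1.2 z.2.1 z.2.2 ∂p}
    = {c : ℝ | ∃ p : Measure ((E d × E d) × (E d × E d)),
        IsCoupling (μ.map (Gmap d h ∘ Fmap d h)) (ν.map (Gmap d h)) p ∧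
        c = ∫ z, (‖z.1.1 - z.2.1‖ ^ 2 + ‖z.1.2 - z.2.2‖ ^ 2) ∂p} := by
  have mT1 : Measurable (Gmap d h ∘ Fmap d h) :=
    ((continuous_Gmap h).comp (continuous_Fmap h)).measurable
  have mT2 : Measurable (Gmap d h) := (continuous_Gmap h).measurable
  have mT1' : Measurable (Finv d h ∘ Ginv d h) :=
    ((continuous_Finv h).comp (continuous_Ginv h)).measurable
  have mT2' : Measurable (Ginv d h) := (continuous_Ginv h).measurable
  have mΦ : Measurable (Prod.map (Gmap d h ∘ Fmap d h) (Gmap d h)) := mT1.prodMap mT2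
  have mΨ : Measurable (Prod.map (Finv d h ∘ Ginv d h) (Ginv d h)) := mT1'.prodMap mT2'
  ext c
  simp only [Set.mem_setOf_eq]
  constructor
  · rintro ⟨p, hp, rfl⟩
    refine ⟨p.map (Prod.map (Gmap d h ∘ Fmap d h) (Gmap d h)), ⟨?_, ?_⟩, ?_⟩
    · rw [Measure.map_map measurable_fst mΦ,
        show (Prod.fst ∘ Prod.map (Gmap d h ∘ Fmap d h) (Gmap d h))
          = (Gmap d h ∘ Fmap d h) ∘ Prod.fst from rfl,
        ← Measure.map_map mT1 measurable_fst, hp.1]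
    · rw [Measure.map_map measurable_snd mΦ,
        show (Prod.snd ∘ Prod.map (Gmap d h ∘ Fmap d h) (Gmap d h))
          = (Gmap d h) ∘ Prod.snd from rfl,
        ← Measure.map_map mT2 measurable_snd, hp.2]
    · rw [integral_map mΦ.aemeasurable continuous_c2.aestronglyMeasurable]
      exact integral_congr_ae (Filter.Eventually.of_forall fun z =>
        (cost_identity h hh z.1 z.2).symm)
  · rintro ⟨q, hq, rfl⟩
    refine ⟨q.map (Prod.map (Finv d h ∘ Ginv d h) (Ginv d h)), ⟨?_, ?_⟩, ?_⟩
    · rw [Measure.map_map measurable_fst mΨ,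
        show (Prod.fst ∘ Prod.map (Finv d h ∘ Ginv d h) (Ginv d h))
          = (Finv d h ∘ Ginv d h) ∘ Prod.fst from rfl,
        ← Measure.map_map mT1' measurable_fst, hq.1,
        Measure.map_map mT1' mT1,
        show ((Finv d h ∘ Ginv d h) ∘ (Gmap d h ∘ Fmap d h)) = id from
          funext fun z => T1inv_T1 h hh z,
        Measure.map_id]
    · rw [Measure.map_map measurable_snd mΨ,
        show (Prod.snd ∘ Prod.map (Finv d h ∘ Ginv d h) (Ginv d h))
          = (Ginv d h) ∘ Prod.snd from rfl,
        ← Measure.map_map mT2' measurable_snd, hq.2,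
        Measure.map_map mT2' mT2,
        show (Ginv d h ∘ Gmap d h) = id from funext fun z => Ginv_Gmap h hh z,
        Measure.map_id]
    · rw [integral_map mΨ.aemeasurable (continuous_c1 h).aestronglyMeasurable]
      refine integral_congr_ae (Filter.Eventually.of_forall fun z => ?_)
      have := cost_identity h hh ((Finv d h ∘ Ginv d h) z.1) (Ginv d h z.2)
      rw [T1_T1inv h hh, Gmap_Ginv h hh] at this
      exact this

end

namespace WhAux
open Filter ENNReal NNReal Topology Set TopologicalSpace

variable {d : ℕ}

/-- the compact exhaustion of `E d × E d` -/
def KX (d : ℕ) (R : ℕ) : Set (E d × E d) :=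
  Metric.closedBall 0 R ×ˢ Metric.closedBall 0 R

lemma isCompact_KX (R : ℕ) : IsCompact (KX d R) :=
  (isCompact_closedBall _ _).prod (isCompact_closedBall _ _)

lemma isClosed_KX (R : ℕ) : IsClosed (KX d R) :=
  (isCompact_KX R).isClosed

lemma tight (μ : Measure (E d × E d)) [IsProbabilityMeasure μ] {δ : ℝ≥0∞} (hδ : 0 < δ) :
    ∃ R : ℕ, μ (KX d R)ᶜ < δ := by
  have hmono : Antitone (fun R : ℕ => (KX d R)ᶜ) := by
    intro a b hab
    apply Set.compl_subset_compl.2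
    exact Set.prod_mono (Metric.closedBall_subset_closedBall (by exact_mod_cast hab))
      (Metric.closedBall_subset_closedBall (by exact_mod_cast hab))
  have hempty : ⋂ R : ℕ, (KX d R)ᶜ = ∅ := by
    rw [← Set.compl_iUnion, Set.compl_empty_iff]
    rw [Set.eq_univ_iff_forall]
    intro x
    obtain ⟨R, hR⟩ := exists_nat_ge (max ‖x.1‖ ‖x.2‖)
    exact Set.mem_iUnion.2 ⟨R, ⟨mem_closedBall_zero_iff.2 ((le_max_left _ _).trans hR),
      mem_closedBall_zero_iff.2 ((le_max_right _ _).trans hR)⟩⟩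
  have htendsto := MeasureTheory.tendsto_measure_iInter_atTop
    (μ := μ) (s := fun R : ℕ => (KX d R)ᶜ)
    (fun R => ((isClosed_KX R).measurableSet.compl).nullMeasurableSet) hmono
    ⟨0, measure_ne_top _ _⟩
  rw [hempty, measure_empty] at htendsto
  exact ((htendsto.eventually_lt_const hδ).exists)

lemma ennreal_eq_of_le_le_add {a b c e : ℝ≥0∞} (h1 : a ≤ c) (h2 : b ≤ e) (hb : b ≠ ⊤)
    (h3 : a + b = c + e) : a = c := by
  refine le_antisymm h1 ?_
  by_contra hlt
  push_neg at hlt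
  exact absurd h3 (ne_of_lt (ENNReal.add_lt_add_of_lt_of_le hb hlt h2))

lemma riemann_upper {g : ℝ → ℝ≥0∞} (hg : Antitone g) {δ : ℝ} (hδ : 0 < δ) (K : ℕ) :
    ∫⁻ t in Set.Ioc 0 ((K : ℝ) * δ), g t ≤
      ∑ k ∈ Finset.range K, g ((k : ℝ) * δ) * ENNReal.ofReal δ := by
  induction K with
  | zero => simp
  | succ K ih =>
    have h0 : (0 : ℝ) ≤ (K : ℝ) * δ := by positivity
    have h1 : (K : ℝ) * δ ≤ ((K + 1 : ℕ) : ℝ) * δ := by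
      push_cast; nlinarith
    rw [← Set.Ioc_union_Ioc_eq_Ioc h0 h1]
    refine le_trans (lintegral_union_le _ _ _) ?_
    rw [Finset.sum_range_succ]
    refine add_le_add ih ?_
    have hbound : ∫⁻ t in Set.Ioc ((K : ℝ) * δ) (((K + 1 : ℕ) : ℝ) * δ), g t ≤
        ∫⁻ _ in Set.Ioc ((K : ℝ) * δ) (((K + 1 : ℕ) : ℝ) * δ), g ((K : ℝ) * δ) := by
      refine setLIntegral_mono measurable_const fun t ht => hg (le_of_lt ht.1)
    refine hbound.trans ?_
    rw [setLIntegral_const, Real.volume_Ioc]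
    rw [show ((K + 1 : ℕ) : ℝ) * δ - (K : ℝ) * δ = δ from by push_cast; ring]

end WhAux

namespace WhAux
open Filter ENNReal NNReal Topology Set TopologicalSpace

variable {d : ℕ}

theorem exists_optimal (μ ν : Measure (E d × E d)) [IsProbabilityMeasure μ]
    [IsProbabilityMeasure ν]
    (f : (E d × E d) × (E d × E d) → ℝ) (hfc : Continuous f) (hf0 : ∀ z, 0 ≤ f z)
    (hint : ∀ p : Measure ((E d × E d) × (E d × E d)), IsCoupling μ ν p → Integrable f p) :
    ∃ p : Measure ((E d × E d) × (E d × E d)), IsCoupling μ ν p ∧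
      ∫ z, f z ∂p = sInf {c : ℝ | ∃ p : Measure ((E d × E d) × (E d × E d)),
        IsCoupling μ ν p ∧ c = ∫ z, f z ∂p} := by
  classical
  set S : Set ℝ := {c : ℝ | ∃ p : Measure ((E d × E d) × (E d × E d)),
    IsCoupling μ ν p ∧ c = ∫ z, f z ∂p} with hSdef
  have hprodc : IsCoupling μ ν (μ.prod ν) := by
    constructor
    · rw [Measure.map_fst_prod]; simp
    · rw [Measure.map_snd_prod]; simp
  have hSne : S.Nonempty := ⟨_, ⟨μ.prod ν, hprodc, rfl⟩⟩
  have hS0 : ∀ c ∈ S, 0 ≤ c := by rintro c ⟨p, hp, rfl⟩; exact integral_nonneg hf0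
  have hbdd : BddBelow S := ⟨0, fun c hc => hS0 c hc⟩
  set m := sInf S with hm
  have hm0 : 0 ≤ m := le_csInf hSne hS0
  -- minimizing sequence
  have hminseq : ∀ n : ℕ, ∃ p : Measure ((E d × E d) × (E d × E d)),
      IsCoupling μ ν p ∧ ∫ z, f z ∂p < m + 1 / ((n : ℝ) + 1) := by
    intro n
    have hlt : m < m + 1 / ((n : ℝ) + 1) := lt_add_of_pos_right _ (by positivity)
    obtain ⟨c, hcS, hc⟩ := exists_lt_of_csInf_lt hSne hlt
    obtain ⟨p, hp, rfl⟩ := hcS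
    exact ⟨p, hp, hc⟩
  choose P hP hPc using hminseq
  have hPprob : ∀ n, IsProbabilityMeasure (P n) := by
    intro n
    constructor
    have h1 : P n Set.univ = μ Set.univ := by
      rw [← (hP n).1, Measure.map_apply measurable_fst MeasurableSet.univ]; rfl
    rw [h1]; exact measure_univ
  have hPm : ∀ n, m ≤ ∫ z, f z ∂(P n) := fun n => csInf_le hbdd ⟨P n, hP n, rfl⟩
  have hPcost : Tendsto (fun n => ∫ z, f z ∂(P n)) atTop (𝓝 m) := by
    have h1 : Tendsto (fun n : ℕ => m + 1 / ((n : ℝ) + 1)) atTop (𝓝 (m + 0)) :=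
      tendsto_const_nhds.add tendsto_one_div_add_atTop_nhds_zero_nat
    rw [add_zero] at h1
    exact tendsto_of_tendsto_of_tendsto_of_le_of_le tendsto_const_nhds h1 hPm
      fun n => (hPc n).le
  -- ultrafilter limits
  set V : Ultrafilter ℕ := Ultrafilter.of atTop with hVdef
  have hVle : (V : Filter ℕ) ≤ atTop := Ultrafilter.of_le _
  have hex : ∀ g : ℕ → ℝ≥0∞, ∃ x, Tendsto g (V : Filter ℕ) (𝓝 x) := by
    intro g
    obtain ⟨x, -, hx⟩ := isCompact_univ.ultrafilter_le_nhds (V.map g)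
      (by rw [le_principal_iff]; exact univ_mem)
    refine ⟨x, ?_⟩
    rw [Ultrafilter.coe_map] at hx
    exact hx
  choose L hL using hex
  set ℓ : Set ((E d × E d) × (E d × E d)) → ℝ≥0∞ := fun s => L (fun n => P n s) with hℓdef
  have hℓt : ∀ s, Tendsto (fun n => P n s) (V : Filter ℕ) (𝓝 (ℓ s)) := fun s => hL _
  have hℓle : ∀ s, ℓ s ≤ 1 := fun s => le_of_tendsto (hℓt s)
    (Eventually.of_forall fun n => by haveI := hPprob n; exact prob_le_one)
  have hℓtop : ∀ s, ℓ s ≠ ⊤ := fun s => ((hℓle s).trans_lt one_lt_top).ne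
  have hℓmono : ∀ {s t : Set ((E d × E d) × (E d × E d))}, s ⊆ t → ℓ s ≤ ℓ t :=
    fun {s t} hst =>
    le_of_tendsto_of_tendsto' (hℓt s) (hℓt t) fun n => measure_mono hst
  have hℓfst : ∀ A : Set (E d × E d), MeasurableSet A → ℓ (Prod.fst ⁻¹' A) = μ A := by
    intro A hA
    refine tendsto_nhds_unique (hℓt _) ?_
    have h1 : ∀ n, P n (Prod.fst ⁻¹' A) = μ A := fun n => by
      rw [← (hP n).1, Measure.map_apply measurable_fst hA]
    simp only [h1]; exact tendsto_const_nhds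
  have hℓsnd : ∀ A : Set (E d × E d), MeasurableSet A → ℓ (Prod.snd ⁻¹' A) = ν A := by
    intro A hA
    refine tendsto_nhds_unique (hℓt _) ?_
    have h1 : ∀ n, P n (Prod.snd ⁻¹' A) = ν A := fun n => by
      rw [← (hP n).2, Measure.map_apply measurable_snd hA]
    simp only [h1]; exact tendsto_const_nhds
  -- the content
  obtain ⟨C, hCK⟩ : ∃ C : Content ((E d × E d) × (E d × E d)),
      ∀ K : Compacts ((E d × E d) × (E d × E d)), C.toFun K = (ℓ ↑K).toNNReal := by
    refine ⟨⟨fun K => (ℓ ↑K).toNNReal, ?_, ?_, ?_⟩, fun _ => rfl⟩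
    · intro K₁ K₂ hsub
      exact ENNReal.toNNReal_mono (hℓtop _) (hℓmono hsub)
    · intro K₁ K₂ hdis h1 h2
      have hun : ℓ (↑K₁ ∪ ↑K₂) = ℓ ↑K₁ + ℓ ↑K₂ := by
        refine tendsto_nhds_unique (hℓt _) ?_
        have h3 : ∀ n, P n (↑K₁ ∪ ↑K₂) = P n ↑K₁ + P n ↑K₂ := fun n =>
          measure_union hdis h2.measurableSet
        simp only [h3]
        exact (hℓt _).add (hℓt _)
      show (ℓ ↑(K₁ ⊔ K₂)).toNNReal = (ℓ ↑K₁).toNNReal + (ℓ ↑K₂).toNNReal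
      rw [Compacts.coe_sup, hun, ENNReal.toNNReal_add (hℓtop _) (hℓtop _)]
    · intro K₁ K₂
      show (ℓ ↑(K₁ ⊔ K₂)).toNNReal ≤ (ℓ ↑K₁).toNNReal + (ℓ ↑K₂).toNNReal
      rw [Compacts.coe_sup]
      have hun : ℓ (↑K₁ ∪ ↑K₂) ≤ ℓ ↑K₁ + ℓ ↑K₂ :=
        le_of_tendsto_of_tendsto' (hℓt _) ((hℓt _).add (hℓt _))
          fun n => measure_union_le _ _
      have h4 := ENNReal.toNNReal_mono (by
        exact ENNReal.add_ne_top.2 ⟨hℓtop _, hℓtop _⟩) hun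
      rwa [ENNReal.toNNReal_add (hℓtop _) (hℓtop _)] at h4
  set p : Measure ((E d × E d) × (E d × E d)) := C.measure with hpdef
  have hCval : ∀ K : Compacts ((E d × E d) × (E d × E d)), (C K : ℝ≥0∞) = ℓ ↑K := by
    intro K
    show ((C.toFun K : ℝ≥0) : ℝ≥0∞) = ℓ ↑K
    rw [hCK, ENNReal.coe_toNNReal (hℓtop _)]
  have hpopen : ∀ U : Set ((E d × E d) × (E d × E d)), IsOpen U → p U ≤ ℓ U := by
    intro U hU
    rw [hpdef, C.measure_apply hU.measurableSet]
    have h1 : C.outerMeasure U = C.innerContent ⟨U, hU⟩ := C.outerMeasure_opens ⟨U, hU⟩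
    rw [h1]
    refine iSup₂_le fun K hK => ?_
    exact le_trans (le_of_eq (hCval K)) (hℓmono hK)
  -- total mass
  have hocontents : ∀ K : Compacts ((E d × E d) × (E d × E d)), ℓ ↑K ≤ p Set.univ := by
    intro K
    rw [hpdef, C.measure_apply MeasurableSet.univ]
    have h1 : C.outerMeasure Set.univ
        = C.innerContent ⟨Set.univ, isOpen_univ⟩ :=
      C.outerMeasure_opens ⟨Set.univ, isOpen_univ⟩
    rw [h1]
    exact le_trans (le_of_eq (hCval K).symm) (C.le_innerContent _ _ (subset_univ _))
  have huniv1 : p Set.univ = 1 := by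
    refine le_antisymm (le_trans (hpopen _ isOpen_univ) (hℓle _)) ?_
    refine ENNReal.le_of_forall_pos_le_add fun ε hε _ => ?_
    have hε2 : (0:ℝ≥0∞) < (ε : ℝ≥0∞) / 2 := by
      simp [ENNReal.div_pos_iff, hε.ne']
    obtain ⟨R₁, hR₁⟩ := tight μ hε2
    obtain ⟨R₂, hR₂⟩ := tight ν hε2
    set R := max R₁ R₂ with hRdef
    have hKXmono : ∀ {a b : ℕ}, a ≤ b → KX d a ⊆ KX d b := by
      intro a b hab
      exact Set.prod_mono (Metric.closedBall_subset_closedBall (by exact_mod_cast hab))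
        (Metric.closedBall_subset_closedBall (by exact_mod_cast hab))
    have hμR : μ (KX d R)ᶜ ≤ (ε : ℝ≥0∞) / 2 :=
      le_of_lt (lt_of_le_of_lt
        (measure_mono (Set.compl_subset_compl.2 (hKXmono (le_max_left _ _)))) hR₁)
    have hνR : ν (KX d R)ᶜ ≤ (ε : ℝ≥0∞) / 2 :=
      le_of_lt (lt_of_le_of_lt
        (measure_mono (Set.compl_subset_compl.2 (hKXmono (le_max_right _ _)))) hR₂)
    set KZ : Set ((E d × E d) × (E d × E d)) := KX d R ×ˢ KX d R with hKZdef
    have hKZc : IsCompact KZ := (isCompact_KX R).prod (isCompact_KX R)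
    have hPn : ∀ n, (1:ℝ≥0∞) ≤ P n KZ + (ε : ℝ≥0∞) := by
      intro n
      have hsplit : KZᶜ ⊆ (Prod.fst ⁻¹' (KX d R)ᶜ) ∪ (Prod.snd ⁻¹' (KX d R)ᶜ) := by
        intro z hz
        by_contra hcon
        simp only [Set.mem_union, Set.mem_preimage, Set.mem_compl_iff, not_or, not_not] at hcon
        exact hz ⟨hcon.1, hcon.2⟩
      have h2 : P n KZᶜ ≤ (ε : ℝ≥0∞) := by
        refine (measure_mono hsplit).trans ((measure_union_le _ _).trans ?_)
        have e1 : P n (Prod.fst ⁻¹' (KX d R)ᶜ) = μ (KX d R)ᶜ := by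
          rw [← (hP n).1, Measure.map_apply measurable_fst (isClosed_KX R).measurableSet.compl]
        have e2 : P n (Prod.snd ⁻¹' (KX d R)ᶜ) = ν (KX d R)ᶜ := by
          rw [← (hP n).2, Measure.map_apply measurable_snd (isClosed_KX R).measurableSet.compl]
        rw [e1, e2]
        calc μ (KX d R)ᶜ + ν (KX d R)ᶜ ≤ (ε : ℝ≥0∞) / 2 + (ε : ℝ≥0∞) / 2 := add_le_add hμR hνR
          _ = (ε : ℝ≥0∞) := ENNReal.add_halves _
      have h3 : P n KZ + P n KZᶜ = 1 := by
        rw [measure_add_measure_compl hKZc.isClosed.measurableSet]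
        exact (hPprob n).measure_univ
      calc (1:ℝ≥0∞) = P n KZ + P n KZᶜ := h3.symm
        _ ≤ P n KZ + (ε : ℝ≥0∞) := add_le_add_right h2 _
    have hK1 : (1:ℝ≥0∞) ≤ ℓ KZ + (ε : ℝ≥0∞) :=
      ge_of_tendsto' ((hℓt KZ).add tendsto_const_nhds) hPn
    exact hK1.trans (add_le_add_left (hocontents ⟨KZ, hKZc⟩) _)
  haveI hpprob : IsProbabilityMeasure p := ⟨huniv1⟩
  -- marginals
  have hmfst : p.map Prod.fst = μ := by
    have hle : ∀ B : Set (E d × E d), MeasurableSet B → (p.map Prod.fst) B ≤ μ B := by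
      intro B hB
      rw [Measure.map_apply measurable_fst hB, Set.measure_eq_iInf_isOpen B μ]
      refine le_iInf fun U => le_iInf fun hBU => le_iInf fun hUopen => ?_
      calc p (Prod.fst ⁻¹' B) ≤ p (Prod.fst ⁻¹' U) := measure_mono (preimage_mono hBU)
        _ ≤ ℓ (Prod.fst ⁻¹' U) := hpopen _ (hUopen.preimage continuous_fst)
        _ = μ U := hℓfst U hUopen.measurableSet
    haveI : IsProbabilityMeasure (p.map Prod.fst) :=
      Measure.isProbabilityMeasure_map measurable_fst.aemeasurable
    refine Measure.ext fun B hB => ?_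
    refine ennreal_eq_of_le_le_add (hle B hB) (hle Bᶜ hB.compl) (measure_ne_top _ _) ?_
    rw [measure_add_measure_compl hB, measure_add_measure_compl hB]
    simp
  have hmsnd : p.map Prod.snd = ν := by
    have hle : ∀ B : Set (E d × E d), MeasurableSet B → (p.map Prod.snd) B ≤ ν B := by
      intro B hB
      rw [Measure.map_apply measurable_snd hB, Set.measure_eq_iInf_isOpen B ν]
      refine le_iInf fun U => le_iInf fun hBU => le_iInf fun hUopen => ?_
      calc p (Prod.snd ⁻¹' B) ≤ p (Prod.snd ⁻¹' U) := measure_mono (preimage_mono hBU)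
        _ ≤ ℓ (Prod.snd ⁻¹' U) := hpopen _ (hUopen.preimage continuous_snd)
        _ = ν U := hℓsnd U hUopen.measurableSet
    haveI : IsProbabilityMeasure (p.map Prod.snd) :=
      Measure.isProbabilityMeasure_map measurable_snd.aemeasurable
    refine Measure.ext fun B hB => ?_
    refine ennreal_eq_of_le_le_add (hle B hB) (hle Bᶜ hB.compl) (measure_ne_top _ _) ?_
    rw [measure_add_measure_compl hB, measure_add_measure_compl hB]
    simp
  have hpcoupling : IsCoupling μ ν p := ⟨hmfst, hmsnd⟩
  -- cost estimates
  have hmfV : Tendsto (fun n => ENNReal.ofReal (∫ z, f z ∂(P n))) (V : Filter ℕ)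
      (𝓝 (ENNReal.ofReal m)) :=
    (ENNReal.continuous_ofReal.tendsto m).comp (hPcost.mono_left hVle)
  have hPlint : ∀ n, ∫⁻ z, ENNReal.ofReal (f z) ∂(P n) = ENNReal.ofReal (∫ z, f z ∂(P n)) :=
    fun n => (ofReal_integral_eq_lintegral_ofReal (hint _ (hP n))
      (Eventually.of_forall hf0)).symm
  set U : ℝ → Set ((E d × E d) × (E d × E d)) := fun t => {z | t < f z} with hUdef
  have hUopen : ∀ t, IsOpen (U t) := fun t => isOpen_lt continuous_const hfc
  set gl : ℝ → ℝ≥0∞ := fun t => ℓ (U t) with hgldef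
  have hglanti : Antitone gl := fun s t hst =>
    hℓmono fun z hz => lt_of_le_of_lt hst hz
  have hkey : ∀ T : ℕ, ∫⁻ t in Set.Ioc (0:ℝ) (T:ℝ), gl t ≤ ENNReal.ofReal m := by
    intro T
    have hstep : ∀ K' : ℕ, ∫⁻ t in Set.Ioc (0:ℝ) (T:ℝ), gl t ≤
        ENNReal.ofReal m + ENNReal.ofReal ((T : ℝ) / ((K' : ℝ) + 1)) := by
      intro K'
      rcases Nat.eq_zero_or_pos T with hT0 | hTpos
      · subst hT0; simp
      set δ : ℝ := (T : ℝ) / ((K' : ℝ) + 1) with hδdef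
      have hδ : 0 < δ := by
        have : (0:ℝ) < (T:ℝ) := by exact_mod_cast hTpos
        positivity
      have hTeq : (T : ℝ) = ((K' + 1 : ℕ) : ℝ) * δ := by
        rw [hδdef]; push_cast; field_simp
      rw [hTeq]
      refine le_trans (riemann_upper hglanti hδ (K' + 1)) ?_
      have hsumt : Tendsto
          (fun n => ∑ k ∈ Finset.range (K' + 1), P n (U ((k : ℝ) * δ)) * ENNReal.ofReal δ)
          (V : Filter ℕ)
          (𝓝 (∑ k ∈ Finset.range (K' + 1), gl ((k : ℝ) * δ) * ENNReal.ofReal δ)) := by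
        refine tendsto_finset_sum _ fun k _ => ?_
        exact ENNReal.Tendsto.mul_const (hℓt _) (Or.inr ofReal_ne_top)
      have hrhs : Tendsto (fun n => ENNReal.ofReal (∫ z, f z ∂(P n)) + ENNReal.ofReal δ)
          (V : Filter ℕ) (𝓝 (ENNReal.ofReal m + ENNReal.ofReal δ)) :=
        hmfV.add tendsto_const_nhds
      have hper : ∀ n, ∑ k ∈ Finset.range (K' + 1), P n (U ((k : ℝ) * δ)) * ENNReal.ofReal δ ≤
          ENNReal.ofReal (∫ z, f z ∂(P n)) + ENNReal.ofReal δ := by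
        intro n
        rw [Finset.sum_range_succ']
        refine add_le_add ?_ ?_
        · rw [← hPlint n]
          have heq : ∀ i ∈ Finset.range K',
              P n (U (((i + 1 : ℕ) : ℝ) * δ)) * ENNReal.ofReal δ
              = ∫⁻ z, (U (((i + 1 : ℕ) : ℝ) * δ)).indicator
                  (fun _ => ENNReal.ofReal δ) z ∂(P n) := by
            intro i _
            rw [lintegral_indicator_const (hUopen _).measurableSet, mul_comm]
          rw [Finset.sum_congr rfl heq, ← lintegral_finset_sum _
            (fun i _ => (measurable_const.indicator (hUopen _).measurableSet))]
          refine lintegral_mono fun z => ?_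
          simp only [Set.indicator_apply]
          set N := ⌊f z / δ⌋₊ with hNdef
          have hsum : (∑ i ∈ Finset.range K',
              if z ∈ U (((i + 1 : ℕ) : ℝ) * δ) then ENNReal.ofReal δ else 0)
              = ((Finset.range K').filter
                  (fun i => z ∈ U (((i + 1 : ℕ) : ℝ) * δ))).card • ENNReal.ofReal δ := by
            rw [← Finset.sum_filter, Finset.sum_const]
          rw [hsum]
          have hcard : ((Finset.range K').filter
              (fun i => z ∈ U (((i + 1 : ℕ) : ℝ) * δ))).card ≤ N := by
            refine le_trans (Finset.card_le_card (fun i hi => ?_)) (le_of_eq (Finset.card_range N))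
            simp only [Finset.mem_filter, Finset.mem_range] at hi
            have h5 : (((i : ℕ) + 1 : ℕ) : ℝ) ≤ f z / δ := by
              rw [le_div_iff₀ hδ]
              exact le_of_lt hi.2
            have h6 := Nat.le_floor h5
            simp only [Finset.mem_range]
            omega
          calc ((Finset.range K').filter _).card • ENNReal.ofReal δ
              = (((Finset.range K').filter
                  (fun i => z ∈ U (((i + 1 : ℕ) : ℝ) * δ))).card : ℝ≥0∞)
                * ENNReal.ofReal δ := by rw [nsmul_eq_mul]
            _ ≤ (N : ℝ≥0∞) * ENNReal.ofReal δ :=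
                mul_le_mul_left (by exact_mod_cast hcard) _
            _ = ENNReal.ofReal ((N : ℝ) * δ) := by
                rw [ENNReal.ofReal_mul (Nat.cast_nonneg N), ENNReal.ofReal_natCast]
            _ ≤ ENNReal.ofReal (f z) := by
                refine ENNReal.ofReal_le_ofReal ?_
                have h7 : (N : ℝ) ≤ f z / δ := Nat.floor_le (div_nonneg (hf0 z) hδ.le)
                calc (N : ℝ) * δ ≤ (f z / δ) * δ := by nlinarith
                  _ = f z := by field_simp
        · calc P n (U (((0 : ℕ) : ℝ) * δ)) * ENNReal.ofReal δ
              ≤ 1 * ENNReal.ofReal δ :=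
                mul_le_mul_left (by haveI := hPprob n; exact prob_le_one) _
            _ = ENNReal.ofReal δ := one_mul _
      exact le_of_tendsto_of_tendsto' hsumt hrhs hper
    have htt : Tendsto (fun K' : ℕ => ENNReal.ofReal m
        + ENNReal.ofReal ((T : ℝ) / ((K' : ℝ) + 1))) atTop
        (𝓝 (ENNReal.ofReal m + 0)) := by
      refine tendsto_const_nhds.add ?_
      have h8 : Tendsto (fun K' : ℕ => (T : ℝ) / ((K' : ℝ) + 1)) atTop (𝓝 0) := by
        have h9 := tendsto_one_div_add_atTop_nhds_zero_nat.const_mul (T : ℝ)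
        rw [mul_zero] at h9
        refine h9.congr fun n => ?_
        rw [mul_one_div]
      have h10 := (ENNReal.continuous_ofReal.tendsto 0).comp h8
      simpa [Function.comp_def] using h10
    rw [← add_zero (ENNReal.ofReal m)]
    exact ge_of_tendsto' htt hstep
  have htrunc : ∀ T : ℕ, ∫⁻ z, ENNReal.ofReal (min (f z) (T:ℝ)) ∂p ≤ ENNReal.ofReal m := by
    intro T
    rw [lintegral_eq_lintegral_meas_lt p
      (Eventually.of_forall fun z => le_min (hf0 z) (by positivity : (0:ℝ) ≤ (T:ℝ)))
      ((hfc.min continuous_const).aemeasurable)]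
    have hTnn : (0:ℝ) ≤ (T:ℝ) := by positivity
    rw [← Set.Ioc_union_Ioi_eq_Ioi hTnn,
      lintegral_union measurableSet_Ioi (Set.Ioc_disjoint_Ioi le_rfl)]
    have hzero : ∫⁻ t in Set.Ioi (T:ℝ), p {a | t < min (f a) (T:ℝ)} = 0 := by
      have hcongr : ∫⁻ t in Set.Ioi (T:ℝ), p {a | t < min (f a) (T:ℝ)}
          = ∫⁻ _ in Set.Ioi (T:ℝ), (0:ℝ≥0∞) := by
        refine setLIntegral_congr_fun measurableSet_Ioi (fun t ht => ?_)
        have hempty : {a | t < min (f a) (T:ℝ)}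
            = (∅ : Set ((E d × E d) × (E d × E d))) := by
          ext a
          simp only [Set.mem_setOf_eq, Set.mem_empty_iff_false, iff_false, not_lt]
          exact (min_le_right _ _).trans (le_of_lt ht)
        rw [hempty, measure_empty]
      rw [hcongr]
      simp
    rw [hzero, add_zero]
    refine le_trans (setLIntegral_mono hglanti.measurable fun t ht => ?_) (hkey T)
    refine le_trans (measure_mono fun a (ha : t < min (f a) (T:ℝ)) =>
      (lt_of_lt_of_le ha (min_le_left _ _) : t < f a)) (hpopen _ (hUopen t))
  have hlim : ∫⁻ z, ENNReal.ofReal (f z) ∂p ≤ ENNReal.ofReal m := by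
    have hptw : ∀ z, ENNReal.ofReal (f z) = ⨆ T : ℕ, ENNReal.ofReal (min (f z) (T:ℝ)) := by
      intro z
      refine le_antisymm ?_ (iSup_le fun T => ENNReal.ofReal_le_ofReal (min_le_left _ _))
      refine le_trans (le_of_eq ?_)
        (le_iSup (fun T : ℕ => ENNReal.ofReal (min (f z) (T:ℝ))) ⌈f z⌉₊)
      rw [min_eq_left (Nat.le_ceil _)]
    calc ∫⁻ z, ENNReal.ofReal (f z) ∂p
        = ∫⁻ z, ⨆ T : ℕ, ENNReal.ofReal (min (f z) (T:ℝ)) ∂p := lintegral_congr hptw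
      _ = ⨆ T : ℕ, ∫⁻ z, ENNReal.ofReal (min (f z) (T:ℝ)) ∂p := by
          refine lintegral_iSup (fun T => ?_) (fun a b hab z => ?_)
          · exact (ENNReal.continuous_ofReal.comp (hfc.min continuous_const)).measurable
          · exact ENNReal.ofReal_le_ofReal (min_le_min le_rfl (by exact_mod_cast hab))
      _ ≤ ENNReal.ofReal m := iSup_le htrunc
  refine ⟨p, hpcoupling, ?_⟩
  have h1 : ∫ z, f z ∂p = (∫⁻ z, ENNReal.ofReal (f z) ∂p).toReal :=
    integral_eq_lintegral_of_nonneg_ae (Eventually.of_forall hf0) hfc.aestronglyMeasurable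
  have h2 : (∫⁻ z, ENNReal.ofReal (f z) ∂p).toReal ≤ m :=
    ENNReal.toReal_le_of_le_ofReal hm0 hlim
  have h3 : m ≤ ∫ z, f z ∂p := csInf_le hbdd ⟨p, hpcoupling, rfl⟩
  exact le_antisymm (by rw [h1]; exact h2) h3

end WhAux

section
open Filter ENNReal NNReal Topology Set WhAux
variable {d : ℕ}

lemma Ch_nonneg (h : ℝ) (z : (E d × E d) × (E d × E d)) :
    0 ≤ Ch d h z.1.1 z.1.2 z.2.1 z.2.2 := by
  unfold Ch; positivity

lemma integrable_cost (h : ℝ) (hh : 0 < h) (μ ν : Measure (E d × E d))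
    [IsProbabilityMeasure μ] [IsProbabilityMeasure ν]
    (hμ : Integrable (fun z : E d × E d => ‖z.1‖ ^ 2 + ‖z.2‖ ^ 2) μ)
    (hν : Integrable (fun z : E d × E d => ‖z.1‖ ^ 2 + ‖z.2‖ ^ 2) ν)
    (p : Measure ((E d × E d) × (E d × E d))) (hp : IsCoupling μ ν p) :
    Integrable (fun z => Ch d h z.1.1 z.1.2 z.2.1 z.2.2) p := by
  have hcont : Continuous (fun w : E d × E d => ‖w.1‖ ^ 2 + ‖w.2‖ ^ 2) := by fun_prop
  have hg1 : Integrable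
      (fun z : (E d × E d) × (E d × E d) => ‖z.1.1‖ ^ 2 + ‖z.1.2‖ ^ 2) p := by
    have h1 : Integrable (fun w : E d × E d => ‖w.1‖ ^ 2 + ‖w.2‖ ^ 2) (p.map Prod.fst) := by
      rw [hp.1]; exact hμ
    exact (integrable_map_measure hcont.aestronglyMeasurable
      measurable_fst.aemeasurable).mp h1
  have hg2 : Integrable
      (fun z : (E d × E d) × (E d × E d) => ‖z.2.1‖ ^ 2 + ‖z.2.2‖ ^ 2) p := by
    have h1 : Integrable (fun w : E d × E d => ‖w.1‖ ^ 2 + ‖w.2‖ ^ 2) (p.map Prod.snd) := by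
      rw [hp.2]; exact hν
    exact (integrable_map_measure hcont.aestronglyMeasurable
      measurable_snd.aemeasurable).mp h1
  have hbound : ∀ z : (E d × E d) × (E d × E d),
      ‖Ch d h z.1.1 z.1.2 z.2.1 z.2.2‖ ≤
      ‖(2 + 48 * (h⁻¹ + 1) ^ 2) *
        ((‖z.1.1‖ ^ 2 + ‖z.1.2‖ ^ 2) + (‖z.2.1‖ ^ 2 + ‖z.2.2‖ ^ 2))‖ := by
    intro z
    obtain ⟨⟨x, v⟩, ⟨x', v'⟩⟩ := z
    have hq : (0:ℝ) ≤ h⁻¹ := (inv_nonneg).2 hh.le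
    refine le_trans (le_of_eq (Real.norm_of_nonneg (Ch_nonneg h ((x,v),(x',v'))))) ?_
    refine le_trans ?_ (le_abs_self _)
    show Ch d h x v x' v' ≤ _
    unfold Ch
    have h1 : ‖v' - v‖ ≤ ‖v'‖ + ‖v‖ := norm_sub_le _ _
    have h2 : ‖h⁻¹ • (x' - x) - (1 / 2 : ℝ) • (v' + v)‖ ≤
        h⁻¹ * (‖x'‖ + ‖x‖) + (1 / 2) * (‖v'‖ + ‖v‖) := by
      refine le_trans (norm_sub_le _ _) ?_
      rw [norm_smul, norm_smul, Real.norm_eq_abs, Real.norm_eq_abs,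
        abs_of_nonneg hq, abs_of_nonneg (by norm_num : (0:ℝ) ≤ (1/2:ℝ))]
      exact add_le_add (mul_le_mul_of_nonneg_left (norm_sub_le _ _) hq)
        (mul_le_mul_of_nonneg_left (norm_add_le _ _) (by norm_num))
    have e1 : h⁻¹ * (‖x'‖ + ‖x‖) + (1 / 2) * (‖v'‖ + ‖v‖) ≤
        (h⁻¹ + 1) * (‖x‖ + ‖x'‖ + ‖v‖ + ‖v'‖) := by
      nlinarith [mul_nonneg hq (norm_nonneg v), mul_nonneg hq (norm_nonneg v'),
        norm_nonneg x, norm_nonneg x', norm_nonneg v, norm_nonneg v',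
        mul_nonneg hq (norm_nonneg x), mul_nonneg hq (norm_nonneg x')]
    have e2 : ‖h⁻¹ • (x' - x) - (1 / 2 : ℝ) • (v' + v)‖ ^ 2 ≤
        ((h⁻¹ + 1) * (‖x‖ + ‖x'‖ + ‖v‖ + ‖v'‖)) ^ 2 :=
      pow_le_pow_left₀ (norm_nonneg _) (h2.trans e1) 2
    have e3 : ((h⁻¹ + 1) * (‖x‖ + ‖x'‖ + ‖v‖ + ‖v'‖)) ^ 2 ≤
        (h⁻¹ + 1) ^ 2 * (4 * (‖x‖ ^ 2 + ‖x'‖ ^ 2 + ‖v‖ ^ 2 + ‖v'‖ ^ 2)) := by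
      rw [mul_pow]
      refine mul_le_mul_of_nonneg_left ?_ (sq_nonneg _)
      nlinarith [sq_nonneg (‖x‖ - ‖x'‖), sq_nonneg (‖x‖ - ‖v‖), sq_nonneg (‖x‖ - ‖v'‖),
        sq_nonneg (‖x'‖ - ‖v‖), sq_nonneg (‖x'‖ - ‖v'‖), sq_nonneg (‖v‖ - ‖v'‖)]
    have e4 : ‖v' - v‖ ^ 2 ≤ (‖v'‖ + ‖v‖) ^ 2 := pow_le_pow_left₀ (norm_nonneg _) h1 2
    nlinarith [e2, e3, e4, sq_nonneg (‖v‖ - ‖v'‖), sq_nonneg (h⁻¹ + 1),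
      norm_nonneg x, norm_nonneg x', norm_nonneg v, norm_nonneg v',
      mul_nonneg (sq_nonneg (h⁻¹ + 1)) (sq_nonneg (‖x‖ + ‖x'‖ + ‖v‖ + ‖v'‖))]
  refine Integrable.mono ((hg1.add hg2).const_mul (2 + 48 * (h⁻¹ + 1) ^ 2))
    (continuous_c1 h).aestronglyMeasurable (Filter.Eventually.of_forall hbound)

end

/-- `W_h(μ,ν) = W₂((G_h∘F_h)_# μ, (G_h)_# ν)` for all `μ,ν ∈ P₂(ℝ^{2d})`; as a
consequence the infimum defining `W_h(μ,ν)` is attained. -/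
theorem Wh_eq_W2_pushforward {d : ℕ} (h : ℝ) (hh : 0 < h)
    (μ ν : Measure (E d × E d)) [IsProbabilityMeasure μ] [IsProbabilityMeasure ν]
    (hμ : Integrable (fun z : E d × E d => ‖z.1‖ ^ 2 + ‖z.2‖ ^ 2) μ)
    (hν : Integrable (fun z : E d × E d => ‖z.1‖ ^ 2 + ‖z.2‖ ^ 2) ν) :
    Whsq d h μ ν = W2sq d (μ.map (Gmap d h ∘ Fmap d h)) (ν.map (Gmap d h)) ∧
    ∃ p : Measure ((E d × E d) × (E d × E d)), IsCoupling μ ν p ∧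
      (∫ z, Ch d h z.1.1 z.1.2 z.2.1 z.2.2 ∂p) = Whsq d h μ ν := by
  constructor
  · unfold Whsq W2sq
    exact congrArg sInf (couplings_sets_eq h hh μ ν)
  · obtain ⟨p, hp, hpe⟩ := WhAux.exists_optimal μ ν
      (fun z => Ch d h z.1.1 z.1.2 z.2.1 z.2.2) (continuous_c1 h)
      (fun z => Ch_nonneg h z)
      (fun p hp => integrable_cost h hh μ ν hμ hν p hp)
    exact ⟨p, hp, hpe⟩
end
end
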